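/- A best match graph (G,σ) is binary explainable (i.e., there exists a binary leaf-colored tree (T,σ) with 𝔅(T,σ) = (G,σ)) if and only if the triple set R^B(G,σ) := R(G,σ) ∪ { bb'|a : ab|b' ∈ F(G,σ) } is consistent. -/

import Mathlib

/-- A planted phylogenetic rooted tree, encoded by a parent function on a
finite vertex set.  The root `0_T` is a fixed point of `parent`; every vertex
reaches the root by iterating `parent`; the root has exactly one child
(`planted`); and every inner vertex (non-root vertex having a child) has at
least two children (`phylo`). -/
structure PPTree where
  V : Type
  [fintypeV : Fintype V]
  [decEqV : DecidableEq V]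
  root : V
  parent : V → V
  parent_root : parent root = root
  reach : ∀ v : V, ∃ n : ℕ, parent^[n] v = root
  planted : ∃! v : V, v ≠ root ∧ parent v = root
  phylo : ∀ v : V, v ≠ root → (∃ u, parent u = v ∧ u ≠ v) →
      ∃ u w, parent u = v ∧ parent w = v ∧ u ≠ w ∧ u ≠ v ∧ w ≠ v

attribute [instance] PPTree.fintypeV PPTree.decEqV

namespace PPTree

variable (T : PPTree)

/-- `T.le x y` means `x ⪯_T y`, i.e. `y` is an ancestor of `x` (or `x = y`). -/
def le (x y : T.V) : Prop := ∃ n : ℕ, T.parent^[n] x = y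

/-- `T.lt x y` means `x ≺_T y`. -/
def lt (x y : T.V) : Prop := T.le x y ∧ x ≠ y

/-- Leaves are the `⪯_T`-minimal vertices, i.e. vertices without children. -/
def isLeaf (v : T.V) : Prop := ∀ u, T.parent u = v → u = v

/-- Inner vertices: neither leaves nor the planted root. -/
def inner (v : T.V) : Prop := v ≠ T.root ∧ ¬ T.isLeaf v

/-- The last common ancestor of two vertices: the `⪯_T`-minimal common
ancestor. -/
noncomputable def lca (x y : T.V) : T.V :=
  @Classical.epsilon _ ⟨T.root⟩
    fun v => T.le x v ∧ T.le y v ∧ ∀ w, T.le x w → T.le y w → T.le v w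

/-- The last common ancestor of a set of vertices. -/
noncomputable def lcaSet (A : Set T.V) : T.V :=
  @Classical.epsilon _ ⟨T.root⟩
    fun v => (∀ a ∈ A, T.le a v) ∧ ∀ w, (∀ a ∈ A, T.le a w) → T.le v w

/-- `ρ_T`, the unique child of the planted root. -/
noncomputable def rho : T.V := T.planted.choose

theorem rho_ne_root : T.rho ≠ T.root := T.planted.choose_spec.1.1

/-- Edges of `T`, identified with their child endpoint: the vertex `v ≠ 0_T`
represents the edge `(parent v, v)`. -/
abbrev Edge := {v : T.V // v ≠ T.root}

/-- The union `V(T) ∪ E(T)`. -/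
abbrev VE := T.V ⊕ T.Edge

/-- The ancestor order `⪯_T` extended to `V(T) ∪ E(T)`: for an edge `e = uv`
(`u` the parent of `v`), `x ⪯ e` iff `x ⪯ v`, `e ⪯ x` iff `u ⪯ x`, and
`e ⪯ f` iff the child endpoints are comparable accordingly. -/
def leVE : T.VE → T.VE → Prop
  | Sum.inl x, Sum.inl y => T.le x y
  | Sum.inl x, Sum.inr e => T.le x e.1
  | Sum.inr e, Sum.inl y => T.le (T.parent e.1) y
  | Sum.inr e, Sum.inr f => T.le e.1 f.1

def ltVE (a b : T.VE) : Prop := T.leVE a b ∧ a ≠ b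

/-- Two elements of `V(T) ∪ E(T)` are comparable. -/
def cmpVE (a b : T.VE) : Prop := T.leVE a b ∨ T.leVE b a

/-- Membership in `L(T)` for elements of `V(T) ∪ E(T)`. -/
def isLeafVE : T.VE → Prop
  | Sum.inl v => T.isLeaf v
  | Sum.inr _ => False

/-- Map an element of `V(T) ∪ E(T)` to a vertex (an edge `uv` is sent to its
child endpoint `v`). -/
def toVertex : T.VE → T.V
  | Sum.inl v => v
  | Sum.inr e => e.1

end PPTree

/-- Axioms (R0)–(R3) of a reconciliation map `μ : V(T) → V(S) ∪ E(S)`. -/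
structure IsRecon (T S : PPTree) (μ : T.V → S.VE) : Prop where
  R0 : ∀ x, μ x = Sum.inl S.root ↔ x = T.root
  R1 : ∀ x, S.isLeafVE (μ x) ↔ T.isLeaf x
  R2 : ∀ x y, T.lt y x → (∃ u, μ x = Sum.inl u) → (∃ v, μ y = Sum.inl v) → μ x ≠ μ y
  R3 : ∀ x y, T.lt y x → ¬ S.ltVE (μ x) (μ y)

/-- A reconciliation is HGT-free if the images of the endpoints of every edge
of `T` are `⪯_S`-comparable. -/
def IsHGTFree (T S : PPTree) (μ : T.V → S.VE) : Prop :=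
  ∀ v : T.V, v ≠ T.root → S.cmpVE (μ (T.parent v)) (μ v)

/-- `(T,S,μ,σ)` is a σ-reconciliation when `μ` restricted to `L(T)` equals
`σ`. -/
def SigmaCompat (T S : PPTree) (μ : T.V → S.VE) (σ : T.V → S.V) : Prop :=
  ∀ x, T.isLeaf x → μ x = Sum.inl (σ x)

/-- A time map for `T`. -/
def IsTimeMap (T : PPTree) (τ : T.V → ℝ) : Prop :=
  ∀ x y, T.lt x y → τ x < τ y

/-- Axioms (S0)–(S3) of a relaxed scenario `(T,S,μ,τ_T,τ_S)`. -/
structure IsRelaxedScenario (T S : PPTree) (μ : T.V → S.VE)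
    (τT : T.V → ℝ) (τS : S.V → ℝ) : Prop where
  timeT : IsTimeMap T τT
  timeS : IsTimeMap S τS
  S0 : ∀ x, μ x = Sum.inl S.root ↔ x = T.root
  S1 : ∀ x, S.isLeafVE (μ x) ↔ T.isLeaf x
  S2 : ∀ x v, μ x = Sum.inl v → τS v = τT x
  S3 : ∀ x (e : S.Edge), μ x = Sum.inr e → τS e.1 < τT x ∧ τT x < τS (S.parent e.1)

/-- A planted phylogenetic tree whose leaf set is (identified with) the finite
type `L` via the embedding `emb`. -/
structure LeafTree (L : Type) [Fintype L] [DecidableEq L] extends PPTree where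
  emb : L → toPPTree.V
  emb_inj : Function.Injective emb
  emb_leaf : ∀ v : L, toPPTree.isLeaf (emb v)
  emb_surj : ∀ l, toPPTree.isLeaf l → ∃ v : L, emb v = l

/-- The tree `T` displays the rooted triple `ab|c`:
`lca(a,b) ≺ lca(a,c) = lca(b,c)`. -/
def displaysTriple (T : PPTree) (a b c : T.V) : Prop :=
  T.lt (T.lca a b) (T.lca a c) ∧ T.lca a c = T.lca b c

section BMG

variable {V Y : Type} [Fintype V] [DecidableEq V]

/-- `y` is a best match of `x` in the leaf-colored tree `(T,σ)`:
`σ(x) ≠ σ(y)` and `lca(x,y) ⪯ lca(x,y')` for all leaves `y'` of the same color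
as `y`. -/
def LeafTree.bestMatch (T : LeafTree V) (σ : V → Y) (x y : V) : Prop :=
  σ x ≠ σ y ∧ ∀ y' : V, σ y' = σ y →
    T.toPPTree.le (T.toPPTree.lca (T.emb x) (T.emb y))
      (T.toPPTree.lca (T.emb x) (T.emb y'))

/-- `(G,σ)` is the best match graph `𝔅(T,σ)` of the leaf-colored tree
`(T,σ)`. -/
def Explains (T : LeafTree V) (σ : V → Y) (G : V → V → Prop) : Prop :=
  ∀ x y : V, G x y ↔ T.bestMatch σ x y

/-- The triple `ab|b'` is informative for `(G,σ)`. -/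
def Informative (G : V → V → Prop) (σ : V → Y) (a b b' : V) : Prop :=
  a ≠ b ∧ a ≠ b' ∧ b ≠ b' ∧ σ a ≠ σ b ∧ σ b = σ b' ∧ G a b ∧ ¬ G a b'

/-- The triple `ab|b'` is forbidden for `(G,σ)`. -/
def Forbidden (G : V → V → Prop) (σ : V → Y) (a b b' : V) : Prop :=
  a ≠ b ∧ a ≠ b' ∧ b ≠ b' ∧ σ a ≠ σ b ∧ σ b = σ b' ∧ G a b ∧ G a b'

end BMG

/-- A tree is binary if every inner vertex has exactly two children. -/
def IsBinary (T : PPTree) : Prop :=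
  ∀ v : T.V, T.inner v →
    ∃ a b : T.V, a ≠ b ∧ T.parent a = v ∧ T.parent b = v ∧ a ≠ v ∧ b ≠ v ∧
      ∀ c : T.V, T.parent c = v → c ≠ v → c = a ∨ c = b


/- ======================  Auxiliary development  ====================== -/

namespace PPTree

variable {T : PPTree}

theorem le_refl (x : T.V) : T.le x x := ⟨0, rfl⟩

theorem le_trans {x y z : T.V} (h1 : T.le x y) (h2 : T.le y z) : T.le x z := by
  obtain ⟨n, hn⟩ := h1; obtain ⟨m, hm⟩ := h2
  exact ⟨m + n, by rw [Function.iterate_add_apply, hn, hm]⟩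

theorem le_parent (x : T.V) : T.le x (T.parent x) := ⟨1, rfl⟩

theorem le_of_parent_le {x z : T.V} (h : T.le (T.parent x) z) : T.le x z :=
  le_trans (le_parent x) h

theorem iterate_root (n : ℕ) : T.parent^[n] T.root = T.root := by
  induction n with
  | zero => rfl
  | succ n ih => rw [Function.iterate_succ_apply, T.parent_root, ih]

theorem le_root (x : T.V) : T.le x T.root := T.reach x

theorem le_antisymm {x y : T.V} (h1 : T.le x y) (h2 : T.le y x) : x = y := by
  obtain ⟨n, hn⟩ := h1; obtain ⟨m, hm⟩ := h2
  rcases Nat.eq_zero_or_pos (m + n) with h0 | hpos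
  · have : n = 0 := by omega
    simpa [this] using hn
  · -- x is on a cycle through itself; x must be the root
    have hx : T.parent^[m + n] x = x := by rw [Function.iterate_add_apply, hn, hm]
    have hcyc : ∀ j : ℕ, T.parent^[j * (m + n)] x = x := by
      intro j; induction j with
      | zero => simp
      | succ j ih => rw [Nat.succ_mul, Function.iterate_add_apply, hx, ih]
    obtain ⟨k, hk⟩ := T.reach x
    have hxr : x = T.root := by
      have h1 : T.parent^[(k + 1) * (m + n)] x = x := hcyc (k + 1)
      have hge : k ≤ (k + 1) * (m + n) := by nlinarith
      calc x = T.parent^[(k + 1) * (m + n)] x := h1.symm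
        _ = T.parent^[(k + 1) * (m + n) - k] (T.parent^[k] x) := by
              rw [← Function.iterate_add_apply]; congr 1; omega
        _ = T.root := by rw [hk, iterate_root]
    have hyr : y = T.root := by rw [← hn, hxr, iterate_root]
    rw [hxr, hyr]

theorem le_total_of_le {x u w : T.V} (h1 : T.le x u) (h2 : T.le x w) :
    T.le u w ∨ T.le w u := by
  obtain ⟨n, hn⟩ := h1; obtain ⟨m, hm⟩ := h2
  rcases Nat.le_total n m with h | h
  · left; exact ⟨m - n, by rw [← hn, ← Function.iterate_add_apply]; rw [← hm]; congr 1; omega⟩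
  · right; exact ⟨n - m, by rw [← hm, ← Function.iterate_add_apply]; rw [← hn]; congr 1; omega⟩

theorem eq_of_le_leaf {x a : T.V} (ha : T.isLeaf a) (h : T.le x a) : x = a := by
  obtain ⟨n, hn⟩ := h
  induction n generalizing x with
  | zero => exact hn
  | succ n ih =>
    rw [Function.iterate_succ_apply'] at hn
    exact ih (ha _ hn)

theorem root_not_leaf : ¬ T.isLeaf T.root := by
  intro h
  exact T.planted.choose_spec.1.1 (h T.rho T.planted.choose_spec.1.2)

theorem parent_rho : T.parent T.rho = T.root := T.planted.choose_spec.1.2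

theorem eq_rho {c : T.V} (h1 : c ≠ T.root) (h2 : T.parent c = T.root) : c = T.rho :=
  T.planted.choose_spec.2 c ⟨h1, h2⟩


open Classical in
theorem lca_spec (T : PPTree) (x y : T.V) :
    T.le x (T.lca x y) ∧ T.le y (T.lca x y) ∧
      ∀ w, T.le x w → T.le y w → T.le (T.lca x y) w := by
  have hex : ∃ v, T.le x v ∧ T.le y v ∧ ∀ w, T.le x w → T.le y w → T.le v w := by
    have hP : ∃ n : ℕ, T.le y (T.parent^[n] x) := by
      obtain ⟨k, hk⟩ := T.reach x
      exact ⟨k, hk ▸ le_root y⟩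
    classical
    let k := Nat.find hP
    refine ⟨T.parent^[k] x, ⟨k, rfl⟩, Nat.find_spec hP, ?_⟩
    rintro w ⟨j, hj⟩ hyw
    have hjP : T.le y (T.parent^[j] x) := hj ▸ hyw
    have hkj : k ≤ j := Nat.find_min' hP hjP
    exact ⟨j - k, by rw [← Function.iterate_add_apply, ← hj]; congr 1; omega⟩
  exact Classical.epsilon_spec hex

theorem le_lca_left (T : PPTree) (x y : T.V) : T.le x (T.lca x y) := (lca_spec T x y).1

theorem le_lca_right (T : PPTree) (x y : T.V) : T.le y (T.lca x y) := (lca_spec T x y).2.1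

theorem lca_le (T : PPTree) {x y w : T.V} (h1 : T.le x w) (h2 : T.le y w) :
    T.le (T.lca x y) w := (lca_spec T x y).2.2 w h1 h2

theorem lca_unique {T : PPTree} {x y v : T.V} (h1 : T.le x v) (h2 : T.le y v)
    (h3 : ∀ w, T.le x w → T.le y w → T.le v w) : T.lca x y = v :=
  le_antisymm (lca_le T h1 h2) (h3 _ (le_lca_left T x y) (le_lca_right T x y))

theorem lca_comm (T : PPTree) (x y : T.V) : T.lca x y = T.lca y x :=
  lca_unique (le_lca_right T y x) (le_lca_left T y x)
    (fun w h1 h2 => lca_le T h2 h1)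

/-- If `lca(x,y) ≺ lca(x,z)` then `lca(x,z) = lca(y,z)`. -/
theorem lca_eq_of_lt {T : PPTree} {x y z : T.V}
    (h : T.lt (T.lca x y) (T.lca x z)) : T.lca x z = T.lca y z := by
  have hyz_le : T.le (T.lca y z) (T.lca x z) :=
    lca_le T (le_trans (le_lca_right T x y) h.1) (le_lca_right T x z)
  refine le_antisymm ?_ hyz_le
  rcases le_total_of_le (le_lca_left T y z) (le_lca_right T x y) with hc | hc
  · -- lca y z ≤ lca x y : then z ≤ lca x y, so lca x z ≤ lca x y, contradiction
    exfalso
    have hz : T.le z (T.lca x y) := le_trans (le_lca_right T y z) hc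
    have : T.le (T.lca x z) (T.lca x y) := lca_le T (le_lca_left T x y) hz
    exact h.2 (le_antisymm h.1 this)
  · -- lca x y ≤ lca y z : then x ≤ lca y z, so lca x z ≤ lca y z
    exact lca_le T (le_trans (le_lca_left T x y) hc) (le_lca_right T y z)

theorem le_rho {T : PPTree} {x : T.V} (h : x ≠ T.root) : T.le x T.rho := by
  classical
  have hP : ∃ n : ℕ, T.parent^[n] x = T.root := T.reach x
  let k := Nat.find hP
  have hk : T.parent^[k] x = T.root := Nat.find_spec hP
  have hkpos : 0 < k := by
    rcases Nat.eq_zero_or_pos k with h0 | h1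
    · exact absurd (by simpa [h0] using hk) h
    · exact h1
  have hstep : T.parent (T.parent^[k-1] x) = T.parent^[1+(k-1)] x :=
    (Function.iterate_add_apply _ 1 (k-1) x).symm
  have hk1 : 1 + (k-1) = k := by omega
  have hc : T.parent (T.parent^[k-1] x) = T.root := by
    rw [hstep, hk1, hk]
  have hcne : T.parent^[k-1] x ≠ T.root := fun hcon => Nat.find_min hP (by omega) hcon
  have : T.parent^[k-1] x = T.rho := eq_rho hcne hc
  exact ⟨k - 1, this⟩

theorem exists_child_of_lt {T : PPTree} {x v : T.V} (h : T.lt x v) :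
    ∃ c, T.parent c = v ∧ c ≠ v ∧ T.le x c := by
  classical
  have hP : ∃ n : ℕ, T.parent^[n] x = v := h.1
  let k := Nat.find hP
  have hk : T.parent^[k] x = v := Nat.find_spec hP
  have hkpos : 0 < k := by
    rcases Nat.eq_zero_or_pos k with h0 | h1
    · exact absurd (by simpa [h0] using hk) h.2
    · exact h1
  have hstep : T.parent (T.parent^[k-1] x) = T.parent^[1+(k-1)] x :=
    (Function.iterate_add_apply _ 1 (k-1) x).symm
  have hk1 : 1 + (k-1) = k := by omega
  refine ⟨T.parent^[k-1] x, ?_, ?_, ⟨k - 1, rfl⟩⟩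
  · rw [hstep, hk1, hk]
  · exact fun hcon => Nat.find_min hP (by omega) hcon

/-- Nothing lies strictly between a vertex and its parent. -/
theorem le_parent_of_le {T : PPTree} {c u : T.V} (h : T.le c u) (hne : c ≠ u) :
    T.le (T.parent c) u := by
  obtain ⟨n, hn⟩ := h
  rcases Nat.eq_zero_or_pos n with h0 | h1
  · exact absurd (by simpa [h0] using hn) hne
  · exact ⟨n - 1, by rw [← Function.iterate_pred_comp_of_pos _ h1] at hn; exact hn⟩

theorem children_eq_of_le {T : PPTree} {c c' v : T.V}
    (hc : T.parent c = v) (hc' : T.parent c' = v) (hcv : c ≠ v) (hcv' : c' ≠ v)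
    (h : T.le c c') : c = c' := by
  by_contra hne
  have h2 : T.le v c' := hc ▸ le_parent_of_le h hne
  have h3 : T.le c' v := hc' ▸ le_parent c'
  exact hcv' (le_antisymm h3 h2)

theorem leaf_ne_root {T : PPTree} {x : T.V} (h : T.isLeaf x) : x ≠ T.root :=
  fun hc => root_not_leaf (hc ▸ h)

end PPTree


section ExplainLemmas

open PPTree

variable {V Y : Type} [Fintype V] [DecidableEq V]
variable {T : LeafTree V} {σ : V → Y} {G : V → V → Prop}

/-- Every explaining tree displays all informative triples. -/
theorem informative_displayed (hE : Explains T σ G) {a b b' : V}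
    (h : Informative G σ a b b') :
    displaysTriple T.toPPTree (T.emb a) (T.emb b) (T.emb b') := by
  obtain ⟨hab, hab', hbb', hσab, hσbb', hG, hnG⟩ := h
  set S := T.toPPTree
  have hbm : T.bestMatch σ a b := (hE a b).1 hG
  have h1 : S.le (S.lca (T.emb a) (T.emb b)) (S.lca (T.emb a) (T.emb b')) :=
    hbm.2 b' hσbb'.symm
  -- b' is not a best match, so some y' is strictly better
  have hnbm : ¬ T.bestMatch σ a b' := fun hc => hnG ((hE a b').2 hc)
  have hσab' : σ a ≠ σ b' := hσbb' ▸ hσab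
  have hy' : ∃ y', σ y' = σ b' ∧
      ¬ S.le (S.lca (T.emb a) (T.emb b')) (S.lca (T.emb a) (T.emb y')) := by
    by_contra hcon
    push_neg at hcon
    exact hnbm ⟨hσab', fun y' hy' => hcon y' hy'⟩
  obtain ⟨y', hσy', hnle⟩ := hy'
  have h2 : S.le (S.lca (T.emb a) (T.emb b)) (S.lca (T.emb a) (T.emb y')) :=
    hbm.2 y' (hσy'.trans hσbb'.symm)
  have hne : S.lca (T.emb a) (T.emb b) ≠ S.lca (T.emb a) (T.emb b') := by
    intro hc; exact hnle (hc ▸ h2)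
  have hlt : S.lt (S.lca (T.emb a) (T.emb b)) (S.lca (T.emb a) (T.emb b')) := ⟨h1, hne⟩
  exact ⟨hlt, lca_eq_of_lt hlt⟩

/-- A binary explaining tree displays `bb'|a` for every forbidden triple `ab|b'`. -/
theorem forbidden_displayed (hE : Explains T σ G) (hbin : IsBinary T.toPPTree)
    {a b b' : V} (h : Forbidden G σ a b b') :
    displaysTriple T.toPPTree (T.emb b) (T.emb b') (T.emb a) := by
  obtain ⟨hab, hab', hbb', hσab, hσbb', hG, hG'⟩ := h
  set S := T.toPPTree with hS
  set ea := T.emb a; set eb := T.emb b; set eb' := T.emb b'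
  have hbm : T.bestMatch σ a b := (hE a b).1 hG
  have hbm' : T.bestMatch σ a b' := (hE a b').1 hG'
  have hu : S.lca ea eb = S.lca ea eb' :=
    le_antisymm (hbm.2 b' hσbb'.symm) (hbm'.2 b hσbb')
  set u := S.lca ea eb with hudef
  -- a, b, b' are strictly below u
  have hlea : S.le ea u := le_lca_left S ea eb
  have hane : ea ≠ u := by
    intro hc
    have hleaf : S.isLeaf u := by rw [← hc]; exact T.emb_leaf a
    have h2 : eb = u := eq_of_le_leaf hleaf (le_lca_right S ea eb)
    exact hab (T.emb_inj (h2.trans hc.symm)).symm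
  have hlta : S.lt ea u := ⟨hlea, hane⟩
  have hltb : S.lt eb u := by
    refine ⟨le_lca_right S ea eb, fun hc => ?_⟩
    have hleaf : S.isLeaf u := by rw [← hc]; exact T.emb_leaf b
    exact hane (eq_of_le_leaf hleaf hlea)
  have hltb' : S.lt eb' u := by
    refine ⟨by rw [hu]; exact le_lca_right S ea eb', fun hc => ?_⟩
    have hleaf : S.isLeaf u := by rw [← hc]; exact T.emb_leaf b'
    exact hane (eq_of_le_leaf hleaf hlea)
  -- u is an inner vertex
  have huroot : u ≠ S.root := by
    intro hc
    have h1 : S.le u S.rho := lca_le S (le_rho (leaf_ne_root (T.emb_leaf a)))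
      (le_rho (leaf_ne_root (T.emb_leaf b)))
    exact S.rho_ne_root (le_antisymm (hc ▸ h1 : S.le S.root S.rho) (le_root S.rho)).symm
  have huleaf : ¬ S.isLeaf u := by
    intro hc; exact hane (eq_of_le_leaf hc hlea)
  obtain ⟨c₁, c₂, hc12, hp1, hp2, hc1u, hc2u, hall⟩ := hbin u ⟨huroot, huleaf⟩
  obtain ⟨ca, hpa, hcau, hlea'⟩ := exists_child_of_lt hlta
  obtain ⟨cb, hpb, hcbu, hleb'⟩ := exists_child_of_lt hltb
  obtain ⟨cb', hpb', hcb'u, hleb''⟩ := exists_child_of_lt hltb'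
  -- b and b' avoid a's child
  have hcba : cb ≠ ca := by
    intro hc
    have h1 : S.le u ca := hudef ▸ lca_le S hlea' (hc ▸ hleb')
    exact hcau (le_antisymm (hpa ▸ le_parent ca) h1)
  have hcb'a : cb' ≠ ca := by
    intro hc
    have h1 : S.le (S.lca ea eb') ca := lca_le S hlea' (hc ▸ hleb'')
    rw [← hu] at h1
    exact hcau (le_antisymm (hpa ▸ le_parent ca) h1)
  have hcbcb' : cb = cb' := by
    rcases hall ca hpa hcau with h1 | h1 <;>
      rcases hall cb hpb hcbu with h2 | h2 <;>
      rcases hall cb' hpb' hcb'u with h3 | h3 <;>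
      first
        | rfl
        | (exact absurd (h2.trans h1.symm) hcba)
        | (exact absurd (h3.trans h1.symm) hcb'a)
        | (exact h2.trans h3.symm)
  -- lca(b,b') ≤ cb < u
  have hlbb' : S.le (S.lca eb eb') cb := lca_le S hleb' (hcbcb' ▸ hleb'')
  have hlcb : S.le cb u := hpb ▸ le_parent cb
  have hltlca : S.lt (S.lca eb eb') u := by
    refine ⟨le_trans hlbb' hlcb, fun hc => ?_⟩
    exact hcbu (le_antisymm hlcb (hc ▸ hlbb'))
  have hba : S.lca eb ea = u := by rw [lca_comm S eb ea, ← hudef]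
  have hba' : S.lca eb' ea = u := by rw [lca_comm S eb' ea, ← hu]
  exact ⟨by rw [hba]; exact hltlca, hba.trans hba'.symm⟩

end ExplainLemmas


section CharLemma

open PPTree

variable {V Y : Type} [Fintype V] [DecidableEq V]
variable {σ : V → Y} {G : V → V → Prop}

/-- In an explaining tree, best matches exist for every color present. -/
theorem bestMatch_exists {T₀ : LeafTree V} (hE : Explains T₀ σ G) (x y : V)
    (hσ : σ x ≠ σ y) : ∃ y'', σ y'' = σ y ∧ G x y'' := by
  classical
  set S := T₀.toPPTree
  set Sf : Finset V := Finset.univ.filter (fun y' => σ y' = σ y) with hSf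
  have hySf : y ∈ Sf := by simp [hSf]
  -- minimize depth of lca over Sf
  have hdep : ∀ y' : V, ∃ n : ℕ,
      S.parent^[n] (T₀.emb x) = S.lca (T₀.emb x) (T₀.emb y') :=
    fun y' => le_lca_left S (T₀.emb x) (T₀.emb y')
  obtain ⟨y'', hy''Sf, hmin⟩ := Sf.exists_min_image
    (fun y' => Nat.find (hdep y')) ⟨y, hySf⟩
  have hσy'' : σ y'' = σ y := by simpa [hSf] using hy''Sf
  refine ⟨y'', hσy'', (hE x y'').2 ⟨hσy'' ▸ hσ, ?_⟩⟩
  intro y' hy'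
  have hy'Sf : y' ∈ Sf := by simp [hSf, hy'.trans hσy'']
  have hle : Nat.find (hdep y'') ≤ Nat.find (hdep y') := hmin y' hy'Sf
  have key : ∀ p q : ℕ, q ≤ p →
      S.parent^[p] (T₀.emb x) = S.lca (T₀.emb x) (T₀.emb y') →
      S.parent^[q] (T₀.emb x) = S.lca (T₀.emb x) (T₀.emb y'') →
      S.le (S.lca (T₀.emb x) (T₀.emb y'')) (S.lca (T₀.emb x) (T₀.emb y')) := by
    intro p q hqp hp hq
    refine ⟨p - q, ?_⟩
    rw [← hq, ← Function.iterate_add_apply, (by omega : p - q + q = p), hp]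
  exact key _ _ hle (Nat.find_spec (hdep y')) (Nat.find_spec (hdep y''))

/-- Any tree displaying all informative triples and the reversed forbidden
triples of a BMG explains it. -/
theorem explains_of_displays {T₀ T : LeafTree V} (hE : Explains T₀ σ G)
    (hR : ∀ a b b' : V, Informative G σ a b b' →
        displaysTriple T.toPPTree (T.emb a) (T.emb b) (T.emb b'))
    (hF : ∀ a b b' : V, Forbidden G σ a b b' →
        displaysTriple T.toPPTree (T.emb b) (T.emb b') (T.emb a)) :
    Explains T σ G := by
  set S := T.toPPTree
  intro x y
  constructor
  · intro hG
    have hbm0 : T₀.bestMatch σ x y := (hE x y).1 hG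
    have hσ : σ x ≠ σ y := hbm0.1
    refine ⟨hσ, fun y' hy' => ?_⟩
    by_cases hyy' : y' = y
    · subst hyy'; exact le_refl _
    by_contra hnle
    -- lca(x,y') < lca(x,y) in T
    have hcmp := le_total_of_le (le_lca_left S (T.emb x) (T.emb y))
      (le_lca_left S (T.emb x) (T.emb y'))
    have hlt : S.lt (S.lca (T.emb x) (T.emb y')) (S.lca (T.emb x) (T.emb y)) := by
      rcases hcmp with h | h
      · exact absurd h hnle
      · exact ⟨h, fun hc => hnle (hc ▸ le_refl _)⟩
    have hxy' : x ≠ y' := fun hc => (hy' ▸ hσ) (congrArg σ hc) 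
    have hxy : x ≠ y := fun hc => hσ (congrArg σ hc)
    by_cases hGy' : G x y'
    · -- forbidden triple x y' y, so T displays y'y|x
      have hforb : Forbidden G σ x y' y :=
        ⟨hxy', hxy, hyy', fun hc => hσ (hy' ▸ hc), hy', hGy', hG⟩
      have hd := hF x y' y hforb
      have heq : S.lca (T.emb y') (T.emb x) = S.lca (T.emb y) (T.emb x) := hd.2
      rw [lca_comm S (T.emb y') (T.emb x), lca_comm S (T.emb y) (T.emb x)] at heq
      exact hlt.2 heq
    · -- informative triple x y y', so T displays xy|y'
      have hinf : Informative G σ x y y' :=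
        ⟨hxy, hxy', fun hc => hyy' hc.symm, hσ, hy'.symm, hG, hGy'⟩
      have hd := hR x y y' hinf
      exact hd.1.2 (le_antisymm hd.1.1 hlt.1)
  · intro hbm
    by_contra hnG
    obtain ⟨y'', hσy'', hGy''⟩ := bestMatch_exists hE x y hbm.1
    have hyy'' : y'' ≠ y := fun hc => hnG (hc ▸ hGy'')
    have hxy : x ≠ y := fun hc => hbm.1 (congrArg σ hc)
    have hxy'' : x ≠ y'' := fun hc => (hσy'' ▸ hbm.1) (congrArg σ hc)
    have hinf : Informative G σ x y'' y :=
      ⟨hxy'', hxy, hyy'', hσy'' ▸ hbm.1, hσy'', hGy'', hnG⟩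
    have hd := hR x y'' y hinf
    have hle : S.le (S.lca (T.emb x) (T.emb y)) (S.lca (T.emb x) (T.emb y'')) :=
      hbm.2 y'' hσy''
    exact hd.1.2 (le_antisymm hd.1.1 hle)

end CharLemma


namespace PPTree

theorem ancestors_of_child {T : PPTree} {x p m vv : T.V} (hpm : T.parent m = vv)
    (hle1 : T.le x p) (hle2 : T.le x m) : T.le p m ∨ T.le vv p := by
  rcases le_total_of_le hle1 hle2 with h | h
  · left; exact h
  · by_cases hmp : m = p
    · left; exact hmp ▸ le_refl _
    · right; exact hpm ▸ le_parent_of_le h hmp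

/-- The set of children of a vertex. -/
def childSet (T : PPTree) (vv : T.V) : Finset T.V :=
  Finset.univ.filter (fun u => T.parent u = vv ∧ u ≠ vv)

theorem mem_childSet {T : PPTree} {vv u : T.V} :
    u ∈ childSet T vv ↔ T.parent u = vv ∧ u ≠ vv := by
  simp [childSet]

def childCount (T : PPTree) (vv : T.V) : ℕ := (childSet T vv).card

/-- The total excess of a tree: 0 iff no vertex has more than 2 children. -/
def excess (T : PPTree) : ℕ := ∑ u : T.V, (childCount T u - 2)

theorem childCount_root (T : PPTree) : childCount T T.root = 1 := by
  classical
  have : childSet T T.root = {T.rho} := by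
    ext u
    simp only [mem_childSet, Finset.mem_singleton]
    constructor
    · rintro ⟨h1, h2⟩; exact eq_rho h2 h1
    · rintro rfl; exact ⟨T.parent_rho, T.rho_ne_root⟩
  rw [childCount, this, Finset.card_singleton]

theorem binary_of_small {T : PPTree} (h : ∀ u, childCount T u ≤ 2) : IsBinary T := by
  intro vv hvv
  have hch : ∃ u, T.parent u = vv ∧ u ≠ vv := by
    by_contra hcon
    push_neg at hcon
    exact hvv.2 hcon
  obtain ⟨a, b, hpa, hpb, hab, hav, hbv⟩ := T.phylo vv hvv.1 hch
  refine ⟨a, b, hab, hpa, hpb, hav, hbv, fun c hpc hcv => ?_⟩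
  by_contra hcon
  push_neg at hcon
  have hsub : {a, b, c} ⊆ childSet T vv := by
    intro u hu
    simp only [Finset.mem_insert, Finset.mem_singleton] at hu
    rcases hu with rfl | rfl | rfl
    · exact mem_childSet.2 ⟨hpa, hav⟩
    · exact mem_childSet.2 ⟨hpb, hbv⟩
    · exact mem_childSet.2 ⟨hpc, hcv⟩
  have hcard : ({a, b, c} : Finset T.V).card = 3 := by
    rw [Finset.card_insert_of_notMem (by simp [hab, Ne.symm hcon.1]),
      Finset.card_insert_of_notMem (by simp [Ne.symm hcon.2]), Finset.card_singleton]
  have := Finset.card_le_card hsub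
  rw [hcard] at this
  exact absurd (this.trans (h vv)) (by omega)

end PPTree

/- =================  The edge-refinement (resolution) step  ================= -/

section Step

open PPTree

variable {T : PPTree} {v c1 : T.V}

/-- Parent function after resolving vertex `v`: a new vertex (`none`) is
inserted below `v`, and all children of `v` except `c1` are moved below it. -/
def stepParent (T : PPTree) (v c1 : T.V) : Option T.V → Option T.V
  | none => some v
  | some u => if T.parent u = v ∧ u ≠ v ∧ u ≠ c1 then none else some (T.parent u)

theorem sp_none : stepParent T v c1 none = some v := rfl

theorem sp_moved {u : T.V} (h : T.parent u = v ∧ u ≠ v ∧ u ≠ c1) :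
    stepParent T v c1 (some u) = none := by simp [stepParent, h]

theorem sp_not_moved {u : T.V} (h : ¬(T.parent u = v ∧ u ≠ v ∧ u ≠ c1)) :
    stepParent T v c1 (some u) = some (T.parent u) := by simp [stepParent, h]

/-- Any path in the new tree between old vertices projects to ancestry in `T`. -/
theorem path_le : ∀ (n : ℕ) (x z : T.V),
    (stepParent T v c1)^[n] (some x) = some z → T.le x z := by
  intro n
  induction n using Nat.strong_induction_on with
  | _ n ih =>
    intro x z h
    rcases n with _ | m
    · exact (Option.some.inj h) ▸ le_refl x
    · rw [Function.iterate_succ_apply] at h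
      by_cases hm : T.parent x = v ∧ x ≠ v ∧ x ≠ c1
      · rw [sp_moved hm] at h
        rcases m with _ | k
        · exact absurd h (by simp)
        · rw [Function.iterate_succ_apply, sp_none] at h
          have hle : T.le v z := ih k (by omega) v z h
          exact le_trans (hm.1 ▸ le_parent x) hle
      · rw [sp_not_moved hm] at h
        exact le_of_parent_le (ih m (by omega) (T.parent x) z h)

theorem sp_reaches_parent (x : T.V) :
    ∃ k, 0 < k ∧ (stepParent T v c1)^[k] (some x) = some (T.parent x) := by
  by_cases hm : T.parent x = v ∧ x ≠ v ∧ x ≠ c1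
  · exact ⟨2, by omega, by
      rw [show (2:ℕ) = 1+1 from rfl, Function.iterate_add_apply]
      simp [Function.iterate_one, sp_moved hm, sp_none, hm.1]⟩
  · exact ⟨1, by omega, by simp [Function.iterate_one, sp_not_moved hm]⟩

theorem le_lift {x z : T.V} (h : T.le x z) :
    ∃ n, (stepParent T v c1)^[n] (some x) = some z := by
  obtain ⟨n, hn⟩ := h
  suffices hgen : ∀ (n : ℕ) (x : T.V), T.parent^[n] x = z →
      ∃ n', (stepParent T v c1)^[n'] (some x) = some z from hgen n x hn
  intro n
  induction n with
  | zero => intro x hx; exact ⟨0, by rw [← hx]; rfl⟩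
  | succ m ih =>
    intro x hx
    rw [Function.iterate_succ_apply] at hx
    obtain ⟨n', hn'⟩ := ih (T.parent x) hx
    obtain ⟨k, _, hk⟩ := sp_reaches_parent (v := v) (c1 := c1) x
    exact ⟨n' + k, by rw [Function.iterate_add_apply, hk, hn']⟩


theorem sp_reach (hvroot : v ≠ T.root) :
    ∀ o : Option T.V, ∃ n, (stepParent T v c1)^[n] o = some T.root := by
  have hsome : ∀ u : T.V, ∃ n, (stepParent T v c1)^[n] (some u) = some T.root :=
    fun u => le_lift (le_root u)
  intro o
  rcases o with _ | u
  · obtain ⟨n, hn⟩ := hsome v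
    exact ⟨n + 1, by rw [Function.iterate_add_apply, Function.iterate_one, sp_none, hn]⟩
  · exact hsome u

theorem sp_parent_root : stepParent T v c1 (some T.root) = some T.root := by
  have hnm : ¬(T.parent T.root = v ∧ T.root ≠ v ∧ T.root ≠ c1) := by
    rintro ⟨h1, h2, -⟩
    exact h2 (by rw [← h1, T.parent_root])
  rw [sp_not_moved hnm, T.parent_root]

theorem sp_planted (hvroot : v ≠ T.root) :
    ∃! o : Option T.V, o ≠ some T.root ∧ stepParent T v c1 o = some T.root := by
  refine ⟨some T.rho, ⟨by simp [T.rho_ne_root], ?_⟩, ?_⟩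
  · rw [sp_not_moved (fun hc => hvroot (T.parent_rho ▸ hc.1.symm)), T.parent_rho]
  · rintro o ⟨ho1, ho2⟩
    rcases o with _ | u
    · rw [sp_none] at ho2
      exact absurd (Option.some.inj ho2) hvroot
    · by_cases hm : T.parent u = v ∧ u ≠ v ∧ u ≠ c1
      · rw [sp_moved hm] at ho2; exact absurd ho2 (by simp)
      · rw [sp_not_moved hm] at ho2
        have : u = T.rho := eq_rho (fun hc => ho1 (by rw [hc])) (Option.some.inj ho2)
        rw [this]

theorem sp_phylo (hp1 : T.parent c1 = v) (hne1 : c1 ≠ v) (hvroot : v ≠ T.root)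
    (hcc : 3 ≤ childCount T v) :
    ∀ o : Option T.V, o ≠ some T.root →
      (∃ u', stepParent T v c1 u' = o ∧ u' ≠ o) →
      ∃ u w, stepParent T v c1 u = o ∧ stepParent T v c1 w = o ∧
        u ≠ w ∧ u ≠ o ∧ w ≠ o := by
  intro o ho hchild
  rcases o with _ | u
  · -- the new vertex `none`: its children are the moved children
    have hc1mem : c1 ∈ childSet T v := mem_childSet.2 ⟨hp1, hne1⟩
    have hcard : 1 < ((childSet T v).erase c1).card := by
      rw [Finset.card_erase_of_mem hc1mem]
      have h3 : 3 ≤ (childSet T v).card := hcc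
      omega
    obtain ⟨a, ha, b, hb, hab⟩ := Finset.one_lt_card.mp hcard
    have hma : T.parent a = v ∧ a ≠ v ∧ a ≠ c1 := by
      obtain ⟨hane, hamem⟩ := Finset.mem_erase.mp ha
      obtain ⟨h1, h2⟩ := mem_childSet.mp hamem
      exact ⟨h1, h2, hane⟩
    have hmb : T.parent b = v ∧ b ≠ v ∧ b ≠ c1 := by
      obtain ⟨hbne, hbmem⟩ := Finset.mem_erase.mp hb
      obtain ⟨h1, h2⟩ := mem_childSet.mp hbmem
      exact ⟨h1, h2, hbne⟩
    exact ⟨some a, some b, sp_moved hma, sp_moved hmb, by simp [hab], by simp, by simp⟩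
  · by_cases huv : u = v
    · subst huv
      refine ⟨some c1, none, ?_, sp_none, by simp, ?_, by simp⟩
      · rw [sp_not_moved (fun hc => hc.2.2 rfl), hp1]
      · simp [hne1]
    · -- old vertex u ≠ v : children are exactly the old ones
      obtain ⟨u', hu', hune⟩ := hchild
      have hold : ∃ c, T.parent c = u ∧ c ≠ u := by
        rcases u' with _ | c
        · rw [sp_none] at hu'
          exact absurd (Option.some.inj hu') (fun hc => huv hc.symm)
        · by_cases hm : T.parent c = v ∧ c ≠ v ∧ c ≠ c1
          · rw [sp_moved hm] at hu'; exact absurd hu' (by simp)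
          · rw [sp_not_moved hm] at hu'
            exact ⟨c, Option.some.inj hu', fun hc => hune (by rw [hc])⟩
      have huroot : u ≠ T.root := fun hc => ho (by rw [hc])
      obtain ⟨a, b, hpa, hpb, hab, hau, hbu⟩ := T.phylo u huroot hold
      have hnma : ¬(T.parent a = v ∧ a ≠ v ∧ a ≠ c1) := fun hc => huv (hpa.symm.trans hc.1)
      have hnmb : ¬(T.parent b = v ∧ b ≠ v ∧ b ≠ c1) := fun hc => huv (hpb.symm.trans hc.1)
      refine ⟨some a, some b, ?_, ?_, by simp [hab], by simp [hau], by simp [hbu]⟩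
      · rw [sp_not_moved hnma, hpa]
      · rw [sp_not_moved hnmb, hpb]

variable (T v c1) in
/-- The tree obtained from `T` by resolving the vertex `v`. -/
def stepT (hp1 : T.parent c1 = v) (hne1 : c1 ≠ v) (hvroot : v ≠ T.root)
    (hcc : 3 ≤ childCount T v) : PPTree where
  V := Option T.V
  fintypeV := inferInstance
  decEqV := inferInstance
  root := some T.root
  parent := stepParent T v c1
  parent_root := sp_parent_root
  reach := sp_reach hvroot
  planted := sp_planted hvroot
  phylo := sp_phylo hp1 hne1 hvroot hcc

attribute [reducible] stepT

variable (hp1 : T.parent c1 = v) (hne1 : c1 ≠ v) (hvroot : v ≠ T.root)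
    (hcc : 3 ≤ childCount T v)

/-- `x` lies below one of the moved children. -/
def UnderW (T : PPTree) (v c1 x : T.V) : Prop :=
  ∃ c, (T.parent c = v ∧ c ≠ v ∧ c ≠ c1) ∧ T.le x c

theorem step_le_some_some {x z : T.V} :
    (stepT T v c1 hp1 hne1 hvroot hcc).le (some x) (some z) ↔ T.le x z := by
  constructor
  · rintro ⟨n, hn⟩; exact path_le n x z hn
  · intro h; exact le_lift h

theorem step_le_some_none {x : T.V} :
    (stepT T v c1 hp1 hne1 hvroot hcc).le (some x) none ↔ UnderW T v c1 x := by
  constructor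
  · rintro ⟨n, hn⟩
    classical
    have hP : ∃ n : ℕ, (stepParent T v c1)^[n] (some x) = none := ⟨n, hn⟩
    have hk := Nat.find_spec hP
    have hkpos : 0 < Nat.find hP := by
      rcases Nat.eq_zero_or_pos (Nat.find hP) with h0 | h1
      · rw [h0] at hk; exact absurd hk (by simp)
      · exact h1
    set k := Nat.find hP with hkdef
    have hprev : (stepParent T v c1)^[k-1] (some x) ≠ none :=
      fun hc => Nat.find_min hP (by omega) hc
    obtain ⟨c, hc⟩ := Option.ne_none_iff_exists'.mp hprev
    have hstep : stepParent T v c1 (some c) = none := by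
      have h2 : (stepParent T v c1)^[(k-1)+1] (some x)
          = stepParent T v c1 ((stepParent T v c1)^[k-1] (some x)) :=
        Function.iterate_succ_apply' _ _ _
      rw [hc, (by omega : (k-1)+1 = k), hk] at h2
      exact h2.symm
    have hm : T.parent c = v ∧ c ≠ v ∧ c ≠ c1 := by
      by_contra hcon
      rw [sp_not_moved hcon] at hstep
      exact absurd hstep (by simp)
    exact ⟨c, hm, path_le (k-1) x c hc⟩
  · rintro ⟨c, hm, hle⟩
    have h1 : (stepT T v c1 hp1 hne1 hvroot hcc).le (some x) (some c) :=
      (step_le_some_some hp1 hne1 hvroot hcc).2 hle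
    exact le_trans h1 ⟨1, sp_moved hm⟩

theorem stepT_parent :
    (stepT T v c1 hp1 hne1 hvroot hcc).parent = stepParent T v c1 := rfl

theorem step_le_none_some {z : T.V} :
    (stepT T v c1 hp1 hne1 hvroot hcc).le none (some z) ↔ T.le v z := by
  constructor
  · rintro ⟨n, hn⟩
    rcases n with _ | m
    · exact absurd hn (by simp)
    · rw [stepT_parent, Function.iterate_succ_apply, sp_none] at hn
      exact path_le m v z hn
  · intro h
    exact le_trans ⟨1, sp_none (c1 := c1)⟩ ((step_le_some_some hp1 hne1 hvroot hcc).2 h)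

theorem step_lca_none {x y : T.V} (hu : T.lca x y = v)
    (hx : UnderW T v c1 x) (hy : UnderW T v c1 y) :
    (stepT T v c1 hp1 hne1 hvroot hcc).lca (some x) (some y) = none := by
  set T' := stepT T v c1 hp1 hne1 hvroot hcc
  refine lca_unique ((step_le_some_none hp1 hne1 hvroot hcc).2 hx)
    ((step_le_some_none hp1 hne1 hvroot hcc).2 hy) ?_
  rintro (_ | w) h1 h2
  · exact PPTree.le_refl (T := stepT T v c1 hp1 hne1 hvroot hcc) none
  · have hw1 : T.le x w := (step_le_some_some hp1 hne1 hvroot hcc).1 h1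
    have hw2 : T.le y w := (step_le_some_some hp1 hne1 hvroot hcc).1 h2
    exact (step_le_none_some hp1 hne1 hvroot hcc).2 (hu ▸ lca_le T hw1 hw2)

theorem step_lca_some {x y : T.V}
    (h : ¬(T.lca x y = v ∧ UnderW T v c1 x ∧ UnderW T v c1 y)) :
    (stepT T v c1 hp1 hne1 hvroot hcc).lca (some x) (some y) = some (T.lca x y) := by
  set T' := stepT T v c1 hp1 hne1 hvroot hcc
  refine lca_unique ((step_le_some_some hp1 hne1 hvroot hcc).2 (le_lca_left T x y))
    ((step_le_some_some hp1 hne1 hvroot hcc).2 (le_lca_right T x y)) ?_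
  rintro (_ | w) h1 h2
  · -- the new vertex is a common ancestor: both x and y are under moved children
    obtain ⟨mx, hmx, hxmx⟩ := (step_le_some_none hp1 hne1 hvroot hcc).1 h1
    obtain ⟨my, hmy, hymy⟩ := (step_le_some_none hp1 hne1 hvroot hcc).1 h2
    rcases ancestors_of_child hmx.1 (le_lca_left T x y) hxmx with hc | hc
    · exact (step_le_some_none hp1 hne1 hvroot hcc).2 ⟨mx, hmx, hc⟩
    · exfalso
      have huv : T.le (T.lca x y) v :=
        lca_le T (le_trans hxmx (hmx.1 ▸ le_parent mx))
          (le_trans hymy (hmy.1 ▸ le_parent my))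
      exact h ⟨le_antisymm huv hc, ⟨mx, hmx, hxmx⟩, ⟨my, hmy, hymy⟩⟩
  · have hw1 : T.le x w := (step_le_some_some hp1 hne1 hvroot hcc).1 h1
    have hw2 : T.le y w := (step_le_some_some hp1 hne1 hvroot hcc).1 h2
    exact (step_le_some_some hp1 hne1 hvroot hcc).2 (lca_le T hw1 hw2)

theorem step_displays {x y z : T.V} (h : displaysTriple T x y z) :
    displaysTriple (stepT T v c1 hp1 hne1 hvroot hcc) (some x) (some y) (some z) := by
  classical
  obtain ⟨⟨hle, hne⟩, heq⟩ := h
  have hiff : (T.lca x z = v ∧ UnderW T v c1 x ∧ UnderW T v c1 z) ↔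
      (T.lca y z = v ∧ UnderW T v c1 y ∧ UnderW T v c1 z) := by
    constructor
    · rintro ⟨huz, hWx, hWz⟩
      refine ⟨heq.symm.trans huz, ?_, hWz⟩
      obtain ⟨mx, hmx, hxmx⟩ := hWx
      rcases ancestors_of_child hmx.1 (le_lca_left T x y) hxmx with hc | hc
      · exact ⟨mx, hmx, le_trans (le_lca_right T x y) hc⟩
      · exact absurd ((le_antisymm (huz ▸ hle) hc).trans huz.symm) hne
    · rintro ⟨hvz, hWy, hWz⟩
      have hxz : T.lca x z = v := heq.trans hvz
      refine ⟨hxz, ?_, hWz⟩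
      obtain ⟨my, hmy, hymy⟩ := hWy
      rcases ancestors_of_child hmy.1 (le_lca_right T x y) hymy with hc | hc
      · exact ⟨my, hmy, le_trans (le_lca_left T x y) hc⟩
      · exact absurd ((le_antisymm (hxz ▸ hle) hc).trans hxz.symm) hne
  constructor
  · -- the `lt` part
    by_cases hPxy : T.lca x y = v ∧ UnderW T v c1 x ∧ UnderW T v c1 y
    · have hPxz : ¬(T.lca x z = v ∧ UnderW T v c1 x ∧ UnderW T v c1 z) :=
        fun hc => hne (hPxy.1.trans hc.1.symm)
      rw [step_lca_none hp1 hne1 hvroot hcc hPxy.1 hPxy.2.1 hPxy.2.2,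
        step_lca_some hp1 hne1 hvroot hcc hPxz]
      exact ⟨(step_le_none_some hp1 hne1 hvroot hcc).2 (hPxy.1 ▸ hle), by simp⟩
    · rw [step_lca_some hp1 hne1 hvroot hcc hPxy]
      by_cases hPxz : T.lca x z = v ∧ UnderW T v c1 x ∧ UnderW T v c1 z
      · rw [step_lca_none hp1 hne1 hvroot hcc hPxz.1 hPxz.2.1 hPxz.2.2]
        refine ⟨?_, by simp⟩
        obtain ⟨mx, hmx, hxmx⟩ := hPxz.2.1
        rcases ancestors_of_child hmx.1 (le_lca_left T x y) hxmx with hc | hc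
        · exact (step_le_some_none hp1 hne1 hvroot hcc).2 ⟨mx, hmx, hc⟩
        · exact absurd ((le_antisymm (hPxz.1 ▸ hle) hc).trans hPxz.1.symm) hne
      · rw [step_lca_some hp1 hne1 hvroot hcc hPxz]
        exact ⟨(step_le_some_some hp1 hne1 hvroot hcc).2 hle,
          fun hc => hne (Option.some.inj hc)⟩
  · -- the equality part
    by_cases hPxz : T.lca x z = v ∧ UnderW T v c1 x ∧ UnderW T v c1 z
    · rw [step_lca_none hp1 hne1 hvroot hcc hPxz.1 hPxz.2.1 hPxz.2.2,
        step_lca_none hp1 hne1 hvroot hcc (hiff.1 hPxz).1 (hiff.1 hPxz).2.1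
          (hiff.1 hPxz).2.2]
    · rw [step_lca_some hp1 hne1 hvroot hcc hPxz,
        step_lca_some hp1 hne1 hvroot hcc (fun hc => hPxz (hiff.2 hc))]
      exact congrArg some heq

theorem step_isLeaf {u : T.V} :
    (stepT T v c1 hp1 hne1 hvroot hcc).isLeaf (some u) ↔ T.isLeaf u := by
  constructor
  · intro hL c hc
    by_contra hnecu
    by_cases hm : T.parent c = v ∧ c ≠ v ∧ c ≠ c1
    · -- then u = v, but c1 is still a child of v
      have huv : u = v := hc ▸ hm.1.symm ▸ rfl
      have h1 : stepParent T v c1 (some c1) = some u := by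
        rw [sp_not_moved (fun hcon => hcon.2.2 rfl), hp1, huv]
      have h2 : c1 = u := Option.some.inj (hL (some c1) h1)
      exact hne1 (h2.trans huv)
    · have h1 : stepParent T v c1 (some c) = some u := by
        rw [sp_not_moved hm, hc]
      exact hnecu (Option.some.inj (hL (some c) h1))
  · intro hL z hz
    rw [stepT_parent hp1 hne1 hvroot hcc] at hz
    have huv : u ≠ v := by
      intro hc; subst hc
      exact hne1 (hL c1 hp1)
    rcases z with _ | c
    · rw [sp_none] at hz
      exact absurd (Option.some.inj hz).symm huv
    · by_cases hm : T.parent c = v ∧ c ≠ v ∧ c ≠ c1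
      · rw [sp_moved hm] at hz; exact absurd hz (by simp)
      · rw [sp_not_moved hm] at hz
        rw [hL c (Option.some.inj hz)]

theorem step_not_leaf_none :
    ¬ (stepT T v c1 hp1 hne1 hvroot hcc).isLeaf none := by
  intro hL
  have hc1mem : c1 ∈ childSet T v := mem_childSet.2 ⟨hp1, hne1⟩
  have hcard : 0 < ((childSet T v).erase c1).card := by
    rw [Finset.card_erase_of_mem hc1mem]
    have h3 : 3 ≤ (childSet T v).card := hcc
    omega
  obtain ⟨m, hmmem⟩ := Finset.card_pos.mp hcard
  obtain ⟨hmne, hmcs⟩ := Finset.mem_erase.mp hmmem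
  obtain ⟨h1, h2⟩ := mem_childSet.mp hmcs
  exact Option.some_ne_none m (hL (some m) (sp_moved ⟨h1, h2, hmne⟩))

theorem step_childSet_some_v :
    childSet (stepT T v c1 hp1 hne1 hvroot hcc) (some v) = {some c1, none} := by
  ext o
  simp only [mem_childSet, mem_childSet (T := stepT T v c1 hp1 hne1 hvroot hcc), Finset.mem_insert, Finset.mem_singleton,
    stepT_parent hp1 hne1 hvroot hcc]
  constructor
  · rintro ⟨h1, h2⟩
    rcases o with _ | c
    · right; rfl
    · left
      by_cases hm : T.parent c = v ∧ c ≠ v ∧ c ≠ c1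
      · rw [sp_moved hm] at h1; exact absurd h1 (by simp)
      · rw [sp_not_moved hm] at h1
        have hpc : T.parent c = v := Option.some.inj h1
        have hcv : c ≠ v := fun hcon => h2 (by rw [hcon])
        have : c = c1 := by
          by_contra hcc1
          exact hm ⟨hpc, hcv, hcc1⟩
        rw [this]
  · rintro (rfl | rfl)
    · exact ⟨by rw [sp_not_moved (fun hcon => hcon.2.2 rfl), hp1], fun hcon => hne1 (Option.some.inj hcon)⟩
    · exact ⟨sp_none, by simp⟩

theorem step_childSet_none :
    childSet (stepT T v c1 hp1 hne1 hvroot hcc) none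
      = ((childSet T v).erase c1).image some := by
  ext o
  simp only [mem_childSet, mem_childSet (T := stepT T v c1 hp1 hne1 hvroot hcc), Finset.mem_image, Finset.mem_erase,
    stepT_parent hp1 hne1 hvroot hcc]
  constructor
  · rintro ⟨h1, h2⟩
    rcases o with _ | c
    · exact absurd rfl h2
    · by_cases hm : T.parent c = v ∧ c ≠ v ∧ c ≠ c1
      · exact ⟨c, ⟨hm.2.2, hm.1, hm.2.1⟩, rfl⟩
      · rw [sp_not_moved hm] at h1; exact absurd h1 (by simp)
  · rintro ⟨c, ⟨hcc1, h1, h2⟩, rfl⟩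
    exact ⟨sp_moved ⟨h1, h2, hcc1⟩, by simp⟩

theorem step_childSet_some {u : T.V} (huv : u ≠ v) :
    childSet (stepT T v c1 hp1 hne1 hvroot hcc) (some u)
      = (childSet T u).image some := by
  ext o
  simp only [mem_childSet, mem_childSet (T := stepT T v c1 hp1 hne1 hvroot hcc), Finset.mem_image, stepT_parent hp1 hne1 hvroot hcc]
  constructor
  · rintro ⟨h1, h2⟩
    rcases o with _ | c
    · rw [sp_none] at h1
      exact absurd (Option.some.inj h1).symm huv
    · by_cases hm : T.parent c = v ∧ c ≠ v ∧ c ≠ c1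
      · rw [sp_moved hm] at h1; exact absurd h1 (by simp)
      · rw [sp_not_moved hm] at h1
        exact ⟨c, ⟨Option.some.inj h1, fun hcon => h2 (by rw [hcon])⟩, rfl⟩
  · rintro ⟨c, ⟨h1, h2⟩, rfl⟩
    have hm : ¬(T.parent c = v ∧ c ≠ v ∧ c ≠ c1) := fun hcon => huv (h1.symm.trans hcon.1)
    exact ⟨by rw [sp_not_moved hm, h1], fun hcon => h2 (Option.some.inj hcon)⟩

theorem step_excess_lt :
    excess (stepT T v c1 hp1 hne1 hvroot hcc) < excess T := by
  classical
  have hinj : Function.Injective (some : T.V → Option T.V) := Option.some_injective _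
  have hc1mem : c1 ∈ childSet T v := mem_childSet.2 ⟨hp1, hne1⟩
  have hccv : childCount (stepT T v c1 hp1 hne1 hvroot hcc) (some v) = 2 := by
    rw [childCount, step_childSet_some_v]
    rw [Finset.card_insert_of_notMem (by simp), Finset.card_singleton]
  have hccn : childCount (stepT T v c1 hp1 hne1 hvroot hcc) none = childCount T v - 1 := by
    rw [childCount, step_childSet_none, Finset.card_image_of_injective _ hinj,
      Finset.card_erase_of_mem hc1mem]
    rfl
  have hccu : ∀ u : T.V, u ≠ v →
      childCount (stepT T v c1 hp1 hne1 hvroot hcc) (some u) = childCount T u := by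
    intro u huv
    rw [childCount, step_childSet_some hp1 hne1 hvroot hcc huv,
      Finset.card_image_of_injective _ hinj]
    rfl
  have hLHS : excess (stepT T v c1 hp1 hne1 hvroot hcc)
      = (childCount (stepT T v c1 hp1 hne1 hvroot hcc) none - 2)
        + ∑ u : T.V, (childCount (stepT T v c1 hp1 hne1 hvroot hcc) (some u) - 2) :=
    Fintype.sum_option _
  have hsplit1 : ∑ u : T.V, (childCount (stepT T v c1 hp1 hne1 hvroot hcc) (some u) - 2)
      = (childCount (stepT T v c1 hp1 hne1 hvroot hcc) (some v) - 2)
        + ∑ u ∈ Finset.univ.erase v,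
            (childCount (stepT T v c1 hp1 hne1 hvroot hcc) (some u) - 2) :=
    (Finset.add_sum_erase Finset.univ _ (Finset.mem_univ v)).symm
  have hsplit2 : excess T = (childCount T v - 2)
      + ∑ u ∈ Finset.univ.erase v, (childCount T u - 2) :=
    (Finset.add_sum_erase Finset.univ _ (Finset.mem_univ v)).symm
  have hsum : ∑ u ∈ Finset.univ.erase v,
      (childCount (stepT T v c1 hp1 hne1 hvroot hcc) (some u) - 2)
      = ∑ u ∈ Finset.univ.erase v, (childCount T u - 2) := by
    refine Finset.sum_congr rfl (fun u hu => ?_)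
    rw [hccu u (Finset.mem_erase.mp hu).1]
  rw [hLHS, hsplit1, hsum, hccv, hccn, hsplit2]
  have h3 : 3 ≤ childCount T v := hcc
  omega

end Step


section Refine

open PPTree

variable {V : Type} [Fintype V] [DecidableEq V]

/-- The resolution step applied to a leaf tree. -/
def stepLT (TL : LeafTree V) (v c1 : TL.toPPTree.V) (hp1 : TL.toPPTree.parent c1 = v)
    (hne1 : c1 ≠ v) (hvroot : v ≠ TL.toPPTree.root)
    (hcc : 3 ≤ childCount TL.toPPTree v) : LeafTree V where
  toPPTree := stepT TL.toPPTree v c1 hp1 hne1 hvroot hcc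
  emb := fun l => some (TL.emb l)
  emb_inj := fun a b h => TL.emb_inj (Option.some.inj h)
  emb_leaf := fun l => (step_isLeaf hp1 hne1 hvroot hcc).2 (TL.emb_leaf l)
  emb_surj := by
    rintro (_ | u) hleaf
    · exact absurd hleaf (step_not_leaf_none hp1 hne1 hvroot hcc)
    · obtain ⟨w, hw⟩ := TL.emb_surj u ((step_isLeaf hp1 hne1 hvroot hcc).1 hleaf)
      exact ⟨w, by simp only []; rw [hw]⟩

/-- Every leaf tree can be refined to a binary leaf tree displaying the same
triples on its leaves. -/
theorem refine_to_binary :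
    ∀ (n : ℕ) (TL : LeafTree V), excess TL.toPPTree ≤ n →
    ∃ TL' : LeafTree V, IsBinary TL'.toPPTree ∧
      ∀ a b c : V, displaysTriple TL.toPPTree (TL.emb a) (TL.emb b) (TL.emb c) →
        displaysTriple TL'.toPPTree (TL'.emb a) (TL'.emb b) (TL'.emb c) := by
  intro n
  induction n with
  | zero =>
    intro TL hex
    refine ⟨TL, binary_of_small (fun u => ?_), fun a b c h => h⟩
    have h0 : excess TL.toPPTree = 0 := Nat.le_zero.mp hex
    have h1 := Finset.sum_eq_zero_iff.mp h0 u (Finset.mem_univ u)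
    omega
  | succ n ih =>
    intro TL hex
    by_cases hsmall : ∀ u, childCount TL.toPPTree u ≤ 2
    · exact ⟨TL, binary_of_small hsmall, fun a b c h => h⟩
    · push_neg at hsmall
      obtain ⟨v, hv⟩ := hsmall
      have hcc : 3 ≤ childCount TL.toPPTree v := hv
      have hvroot : v ≠ TL.toPPTree.root := by
        intro hc; rw [hc, childCount_root] at hcc; omega
      have hpos : 0 < (childSet TL.toPPTree v).card := by
        have : 3 ≤ (childSet TL.toPPTree v).card := hcc
        omega
      obtain ⟨c1, hc1⟩ := Finset.card_pos.mp hpos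
      obtain ⟨hp1, hne1⟩ := mem_childSet.mp hc1
      have hexlt : excess (stepLT TL v c1 hp1 hne1 hvroot hcc).toPPTree
          < excess TL.toPPTree := step_excess_lt hp1 hne1 hvroot hcc
      obtain ⟨TL', hbin, htr⟩ := ih (stepLT TL v c1 hp1 hne1 hvroot hcc) (by omega)
      refine ⟨TL', hbin, fun a b c h => htr a b c ?_⟩
      exact step_displays hp1 hne1 hvroot hcc h

end Refine

/-- A best match graph `(G,σ)` is binary explainable iff the
triple set `R^B(G,σ) = R(G,σ) ∪ { bb'|a : ab|b' ∈ F(G,σ) }` is consistent,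
i.e. some tree on the leaf set `V` displays all of its triples. -/
theorem binary_explainable_iff_RB_consistent
    {V Y : Type} [Fintype V] [DecidableEq V]
    (G : V → V → Prop) (σ : V → Y)
    (hBMG : ∃ T : LeafTree V, Explains T σ G) :
    (∃ T : LeafTree V, IsBinary T.toPPTree ∧ Explains T σ G) ↔
    (∃ T : LeafTree V,
        (∀ a b b' : V, Informative G σ a b b' →
            displaysTriple T.toPPTree (T.emb a) (T.emb b) (T.emb b')) ∧
        (∀ a b b' : V, Forbidden G σ a b b' →
            displaysTriple T.toPPTree (T.emb b) (T.emb b') (T.emb a))) := by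
  obtain ⟨T₀, hT₀⟩ := hBMG
  constructor
  · rintro ⟨T, hbin, hexp⟩
    exact ⟨T, fun a b b' h => informative_displayed hexp h,
      fun a b b' h => forbidden_displayed hexp hbin h⟩
  · rintro ⟨Ts, hRdisp, hFdisp⟩
    obtain ⟨T', hbin, htr⟩ :=
      refine_to_binary (PPTree.excess Ts.toPPTree) Ts le_rfl
    exact ⟨T', hbin, explains_of_displays hT₀
      (fun a b b' h => htr _ _ _ (hRdisp a b b' h))
      (fun a b b' h => htr _ _ _ (hFdisp a b b' h))⟩
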